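/- Let n ≥ 3 and 0 < m ≤ M be real numbers. Then for every real λ ∈ [1, n−1], λM/(λM + (n−1−λ)m) − (λ−1)m/((λ−1)m + (n−λ)M + M) ≤ (nM − (n−2)m)/(nM + (n−2)m) + (n−2)Mm/([(n−2)m+M][(n−2)m+2M]). -/

import Mathlib

theorem key_aux_stmt12 (a b k u : ℝ) (hk : 1 ≤ k) (ha : 0 < a) (hab : a ≤ b)
    (hu : 0 ≤ u) (huk : u ≤ k) :
    2*k*a/((k+2)*b + k*a) - k*b*a/((k*a+b)*(k*a+2*b))
      ≤ (k-u)*a/((u+1)*b + (k-u)*a) + u*a/(u*a + (k-u+1)*b + b) := by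
  have hb : 0 < b := ha.trans_le hab
  have hs : 0 ≤ k - u := by linarith
  have hd1 : 0 < (u+1)*b + (k-u)*a := by
    nlinarith [mul_nonneg hs ha.le, mul_pos (by linarith : (0:ℝ) < u+1) hb]
  have hd2 : 0 < u*a + (k-u+1)*b + b := by
    nlinarith [mul_nonneg hu ha.le, mul_pos (by linarith : (0:ℝ) < k-u+1) hb]
  have hd3 : 0 < (k+2)*b + k*a := by
    nlinarith [mul_pos (by linarith : (0:ℝ) < k+2) hb,
      mul_nonneg (by linarith : (0:ℝ) ≤ k) ha.le]
  have hd4 : 0 < k*a + b := by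
    nlinarith [mul_nonneg (by linarith : (0:ℝ) ≤ k) ha.le]
  have hd5 : 0 < k*a + 2*b := by
    nlinarith [mul_nonneg (by linarith : (0:ℝ) ≤ k) ha.le]
  have hd6 : 0 < k*(a+b) + 4*b := by
    nlinarith [mul_pos (by linarith : (0:ℝ) < k) (by linarith : (0:ℝ) < a+b)]
  set X := (k-u)*((u+1)*b + (k-u)*a) + u*(u*a + (k-u+1)*b + b) with hXdef
  have hX : 0 < X := by
    rw [hXdef]
    nlinarith [mul_nonneg ha.le (sq_nonneg (k-2*u)),
      mul_nonneg ha.le (by nlinarith : (0:ℝ) ≤ k^2 - 1),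
      mul_nonneg (mul_nonneg hs hu) hb.le, mul_nonneg hs hb.le, mul_nonneg hu hb.le]
  have cs : k^2/X ≤ (k-u)/((u+1)*b + (k-u)*a) + u/(u*a + (k-u+1)*b + b) := by
    rw [div_add_div _ _ hd1.ne' hd2.ne', div_le_div_iff₀ hX (mul_pos hd1 hd2), hXdef]
    nlinarith [mul_nonneg (mul_nonneg hs hu)
      (sq_nonneg (((u+1)*b + (k-u)*a) - (u*a + (k-u+1)*b + b)))]
  have hXle : 2*X ≤ k*(k*(a+b) + 4*b) := by
    rw [hXdef]
    nlinarith [mul_nonneg (sub_nonneg.2 hab) (sq_nonneg (k-2*u)),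
      mul_nonneg hb.le (sub_nonneg.2 huk)]
  have step2 : 2*k/(k*(a+b)+4*b) ≤ k^2/X := by
    rw [div_le_div_iff₀ hd6 hX]
    nlinarith [mul_le_mul_of_nonneg_left hXle (by linarith : (0:ℝ) ≤ k)]
  have stepA : 2*k/((k+2)*b + k*a) - k*b/((k*a+b)*(k*a+2*b)) ≤ 2*k/(k*(a+b)+4*b) := by
    rw [sub_le_iff_le_add, div_add_div _ _ hd6.ne' (mul_pos hd4 hd5).ne',
      div_le_div_iff₀ hd3 (mul_pos hd6 (mul_pos hd4 hd5))]
    nlinarith [mul_nonneg (mul_nonneg (mul_nonneg (by linarith : (0:ℝ) ≤ k) hb.le)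
      (by nlinarith [mul_nonneg (by linarith : (0:ℝ) ≤ k) (sub_nonneg.2 hab)] :
        (0:ℝ) ≤ k*b - k*a))
      (by nlinarith [mul_nonneg (by linarith : (0:ℝ) ≤ k) ha.le,
        mul_pos (by linarith : (0:ℝ) < k+6) hb] : (0:ℝ) ≤ 3*(k*a) + (k+6)*b)]
  have core : 2*k/((k+2)*b + k*a) - k*b/((k*a+b)*(k*a+2*b))
      ≤ (k-u)/((u+1)*b + (k-u)*a) + u/(u*a + (k-u+1)*b + b) :=
    le_trans stepA (le_trans step2 cs)
  calc 2*k*a/((k+2)*b + k*a) - k*b*a/((k*a+b)*(k*a+2*b))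
      = a * (2*k/((k+2)*b + k*a) - k*b/((k*a+b)*(k*a+2*b))) := by ring
    _ ≤ a * ((k-u)/((u+1)*b + (k-u)*a) + u/(u*a + (k-u+1)*b + b)) :=
        mul_le_mul_of_nonneg_left core ha.le
    _ = (k-u)*a/((u+1)*b + (k-u)*a) + u*a/(u*a + (k-u+1)*b + b) := by ring

theorem stmt_12 {n : ℕ} (hn : 3 ≤ n) (m M : ℝ) (hm : 0 < m) (hmM : m ≤ M) :
    ∀ l ∈ Set.Icc (1 : ℝ) ((n : ℝ) - 1),
      l * M / (l * M + ((n : ℝ) - 1 - l) * m)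
        - (l - 1) * m / ((l - 1) * m + ((n : ℝ) - l) * M + M)
      ≤ ((n : ℝ) * M - ((n : ℝ) - 2) * m) / ((n : ℝ) * M + ((n : ℝ) - 2) * m)
        + ((n : ℝ) - 2) * M * m / ((((n : ℝ) - 2) * m + M) * (((n : ℝ) - 2) * m + 2 * M)) := by
  intro l hl
  obtain ⟨hl1, hl2⟩ := hl
  have hM : 0 < M := hm.trans_le hmM
  have hN : (3:ℝ) ≤ (n:ℝ) := by exact_mod_cast hn
  have key' := key_aux_stmt12 m M ((n:ℝ) - 2) (l - 1) (by linarith) hm hmM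
    (by linarith) (by linarith)
  have d1 : (0:ℝ) < l*M + ((n:ℝ)-1-l)*m := by
    nlinarith [mul_nonneg (by linarith : (0:ℝ) ≤ (n:ℝ)-1-l) hm.le,
      mul_le_mul_of_nonneg_right hl1 hM.le]
  have d3 : (0:ℝ) < (n:ℝ)*M + ((n:ℝ)-2)*m := by
    nlinarith [mul_nonneg (by linarith : (0:ℝ) ≤ (n:ℝ)-2) hm.le,
      mul_pos (by linarith : (0:ℝ) < (n:ℝ)) hM]
  have e1 : l * M / (l * M + ((n : ℝ) - 1 - l) * m)
      = 1 - ((n:ℝ)-2-(l-1))*m/((l-1+1)*M + ((n:ℝ)-2-(l-1))*m) := by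
    rw [eq_sub_iff_add_eq,
      show (l-1+1)*M + ((n:ℝ)-2-(l-1))*m = l*M + ((n:ℝ)-1-l)*m from by ring,
      ← add_div,
      show l*M + ((n:ℝ)-2-(l-1))*m = l*M + ((n:ℝ)-1-l)*m from by ring]
    exact div_self d1.ne'
  have e2 : ((n : ℝ) * M - ((n : ℝ) - 2) * m) / ((n : ℝ) * M + ((n : ℝ) - 2) * m)
      = 1 - 2*((n:ℝ)-2)*m/(((n:ℝ)-2+2)*M + ((n:ℝ)-2)*m) := by
    rw [eq_sub_iff_add_eq,
      show ((n:ℝ)-2+2)*M + ((n:ℝ)-2)*m = (n:ℝ)*M + ((n:ℝ)-2)*m from by ring,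
      ← add_div,
      show (n:ℝ)*M - ((n:ℝ)-2)*m + 2*((n:ℝ)-2)*m = (n:ℝ)*M + ((n:ℝ)-2)*m from by ring]
    exact div_self d3.ne'
  rw [e1, e2,
    show (l - 1) * m + ((n : ℝ) - l) * M + M
      = (l-1) * m + ((n:ℝ)-2-(l-1)+1) * M + M from by ring]
  linarith [key']
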